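/- arXiv:2406.06797 — 3 statements merged into one kernel-verified Lean document; each statement's English description precedes it below -/
import Mathlib

section
/- For all integers n ≥ 0 and m ≥ 0: Σ_{k=0}^{n} C(n,k) (−1)^k H_k(m) = (−1)^n (m!/n!) s(n,m). -/
open Finset

/-- Multiple harmonic-like numbers `H_n(m)`: the sum of `1/(k_1 ⋯ k_m)` over all
`m`-tuples of positive integers with `k_1 + ⋯ + k_m ≤ n`. -/
def Hml (n m : ℕ) : ℚ :=
  ∑ k ∈ (Fintype.piFinset fun _ : Fin m => Finset.Icc 1 n).filter
      (fun k => ∑ i, k i ≤ n),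
    ∏ i, (1 : ℚ) / (k i : ℚ)

/-- The `n`-th harmonic number. -/
def harm (n : ℕ) : ℚ := ∑ j ∈ Finset.Icc 1 n, (1 : ℚ) / (j : ℚ)

/-- The `n`-th second-order harmonic number. -/
def harm2 (n : ℕ) : ℚ := ∑ j ∈ Finset.Icc 1 n, (1 : ℚ) / (j : ℚ) ^ 2

/-- The `n`-th odd harmonic number. -/
def oddharm (n : ℕ) : ℚ := ∑ k ∈ Finset.Icc 1 n, (1 : ℚ) / (2 * (k : ℚ) - 1)

/-- Signed Stirling numbers of the first kind. -/
def stirlingFirst : ℕ → ℕ → ℤ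
  | 0, 0 => 1
  | 0, _ + 1 => 0
  | _ + 1, 0 => 0
  | n + 1, k + 1 => stirlingFirst n k - n * stirlingFirst n (k + 1)

/-- Generalized binomial coefficient `C(r, k) = r(r−1)⋯(r−k+1)/k!`. -/
noncomputable def gchoose (r : ℂ) (k : ℕ) : ℂ :=
  (∏ i ∈ Finset.range k, (r - i)) / (k.factorial : ℂ)


lemma Hml_zero_right (n : ℕ) : Hml n 0 = 1 := by
  simp [Hml]

lemma Hml_zero_left (m : ℕ) : Hml 0 (m+1) = 0 := by
  simp [Hml]
-- box enlargement
lemma box_eq (m n N : ℕ) (h : n ≤ N) :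
    ((Fintype.piFinset fun _ : Fin m => Finset.Icc 1 N).filter (fun k => ∑ i, k i ≤ n))
    = ((Fintype.piFinset fun _ : Fin m => Finset.Icc 1 n).filter (fun k => ∑ i, k i ≤ n)) := by
  ext k
  simp only [mem_filter, Fintype.mem_piFinset, mem_Icc]
  constructor
  · rintro ⟨h1, h2⟩
    refine ⟨fun a => ⟨(h1 a).1, ?_⟩, h2⟩
    exact le_trans (Finset.single_le_sum (f := k) (fun i _ => Nat.zero_le _) (mem_univ a)) h2
  · rintro ⟨h1, h2⟩
    exact ⟨fun a => ⟨(h1 a).1, le_trans (h1 a).2 h⟩, h2⟩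

lemma Hml_box (n N m : ℕ) (h : n ≤ N) :
    Hml n m = ∑ k ∈ (Fintype.piFinset fun _ : Fin m => Finset.Icc 1 N).filter
      (fun k => ∑ i, k i ≤ n), ∏ i, (1 : ℚ) / (k i : ℚ) := by
  rw [Hml, box_eq m n N h]

lemma Hml_split (n m : ℕ) :
    Hml n (m+1) = ∑ j ∈ Finset.Icc 1 n, (1 : ℚ) / j * Hml (n - j) m := by
  have rhs : ∀ j ∈ Finset.Icc 1 n, (1 : ℚ)/j * Hml (n-j) m
      = ∑ t ∈ (Fintype.piFinset fun _ : Fin m => Finset.Icc 1 n).filter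
          (fun t => ∑ i, t i ≤ n - j), ((1:ℚ)/j * ∏ i, (1 : ℚ) / (t i : ℚ)) := by
    intro j hj
    rw [Hml_box (n-j) n m (Nat.sub_le n j), Finset.mul_sum]
  rw [Finset.sum_congr rfl rhs, Hml]
  rw [← Finset.sum_sigma (f := fun p : Σ _ : ℕ, (Fin m → ℕ) => (1:ℚ)/(p.1:ℚ) * ∏ i, (1:ℚ)/(p.2 i : ℚ))]
  apply Finset.sum_nbij' (i := fun k => (⟨k 0, Fin.tail k⟩ : Σ _ : ℕ, (Fin m → ℕ)))
    (j := fun p => Fin.cons p.1 p.2)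
  · intro k hk
    simp only [mem_filter, Fintype.mem_piFinset, mem_Icc] at hk
    obtain ⟨h1, h2⟩ := hk
    have hsum := Fin.sum_univ_succ k
    simp only [Finset.mem_sigma, mem_filter, Fintype.mem_piFinset, mem_Icc]
    refine ⟨⟨(h1 0).1, (h1 0).2⟩, fun a => h1 a.succ, ?_⟩
    have : k 0 + ∑ i : Fin m, Fin.tail k i ≤ n := by
      simp only [Fin.tail]; omega
    omega
  · intro p hp
    simp only [Finset.mem_sigma, mem_filter, Fintype.mem_piFinset, mem_Icc] at hp
    obtain ⟨hj, h1, h2⟩ := hp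
    simp only [mem_filter, Fintype.mem_piFinset, mem_Icc]
    constructor
    · intro a
      refine Fin.cases ?_ ?_ a
      · simpa using hj
      · intro i; simpa using h1 i
    · rw [Fin.sum_univ_succ]
      simp only [Fin.cons_zero, Fin.cons_succ]
      omega
  · intro k _; exact Fin.cons_self_tail k
  · intro p _; simp
  · intro k hk
    rw [Fin.prod_univ_succ]
    simp [Fin.tail]

lemma tele (F : ℕ → ℚ) (n : ℕ) :
    ∑ j ∈ Finset.Icc 1 n, (F (n + 1 - j) - F (n - j)) = F n - F 0 := by
  rw [← Finset.Ico_add_one_right_eq_Icc, Finset.sum_Ico_eq_sum_range]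
  simp only [Nat.add_sub_cancel_left, Nat.succ_sub_one, Nat.add_sub_cancel]
  have h1 : ∀ i ∈ range n, F (n + 1 - (1 + i)) - F (n - (1 + i)) = F (n - i) - F (n - 1 - i) := by
    intro i hi; congr 2 <;> omega
  rw [Finset.sum_congr rfl h1]
  have h0 := Finset.sum_range_reflect (fun i => F (i + 1) - F i) n
  have h2 : ∀ i ∈ range n, F (n - i) - F (n - 1 - i) = (fun i => F (i+1) - F i) (n - 1 - i) := by
    intro i hi
    simp only [mem_range] at hi
    simp only []
    congr 2 <;> omega
  rw [Finset.sum_congr rfl h2, h0, Finset.sum_range_sub]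

lemma L1 : ∀ m n : ℕ, ((n:ℚ)+1) * (Hml (n+1) (m+1) - Hml n (m+1)) = ((m:ℚ)+1) * Hml n m := by
  intro m
  induction m with
  | zero =>
    intro n
    rw [Hml_split (n+1) 0, Hml_split n 0, Hml_zero_right]
    have h1 : ∀ r : ℕ, ∑ j ∈ Finset.Icc 1 r, (1:ℚ)/j * Hml (r - j) 0
        = ∑ j ∈ Finset.Icc 1 r, (1:ℚ)/j := by
      intro r; apply Finset.sum_congr rfl; intro j hj; rw [Hml_zero_right, mul_one]
    rw [h1, h1, Finset.sum_Icc_succ_top (by omega : 1 ≤ n+1)]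
    have : ((n:ℚ)+1) ≠ 0 := by positivity
    push_cast
    field_simp
    ring
  | succ m ih =>
    intro n
    rw [Hml_split (n+1) (m+1), Hml_split n (m+1),
      Finset.sum_Icc_succ_top (by omega : 1 ≤ n+1)]
    rw [show n + 1 - (n+1) = 0 from by omega, Hml_zero_left, mul_zero, add_zero,
      ← Finset.sum_sub_distrib, Finset.mul_sum]
    have key : ∀ j ∈ Finset.Icc 1 n,
        ((n:ℚ)+1) * ((1:ℚ)/j * Hml (n+1-j) (m+1) - (1:ℚ)/j * Hml (n-j) (m+1))
        = (Hml (n+1-j) (m+1) - Hml (n-j) (m+1)) + ((m:ℚ)+1) * ((1:ℚ)/j * Hml (n-j) m) := by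
      intro j hj
      simp only [mem_Icc] at hj
      have hj0 : (j:ℚ) ≠ 0 := by
        have : 0 < j := hj.1
        positivity
      have hidx : n + 1 - j = (n - j) + 1 := by omega
      have ihj := ih (n - j)
      rw [Nat.cast_sub hj.2] at ihj
      rw [hidx]
      have hc : ((m:ℚ)+1) * ((1:ℚ)/j * Hml (n-j) m)
          = 1/(j:ℚ) * (((n:ℚ) - j + 1) * (Hml ((n-j)+1) (m+1) - Hml (n-j) (m+1))) := by
        rw [ihj]; ring
      rw [hc]
      have hjn : (j:ℚ) ≤ (n:ℚ) := by exact_mod_cast hj.2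
      field_simp
      ring
    rw [Finset.sum_congr rfl key, Finset.sum_add_distrib,
      tele (fun r => Hml r (m+1)) n, ← Finset.mul_sum, ← Hml_split n m]
    rw [Hml_zero_left]
    push_cast
    ring

def Gml : ℕ → ℕ → ℚ
  | 0, m => Hml 0 m
  | n+1, m => Hml (n+1) m - Hml n m

lemma Gml_zero : ∀ m, Gml 0 m = Hml 0 m := fun _ => rfl
lemma Gml_succ (n m : ℕ) : Gml (n+1) m = Hml (n+1) m - Hml n m := rfl

lemma Gml_zero_right : ∀ n, Gml n 0 = if n = 0 then 1 else 0 := by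
  intro n
  cases n with
  | zero => simp [Gml_zero, Hml_zero_right]
  | succ j => simp [Gml_succ, Hml_zero_right]

lemma L1' (n m : ℕ) : ((n:ℚ)+1) * Gml (n+1) (m+1) = ((m:ℚ)+1) * Hml n m := by
  rw [Gml_succ]; exact L1 m n

lemma Gml_rec (n k : ℕ) :
    ((n:ℚ)+1) * Gml (n+1) (k+1) = ((k:ℚ)+1) * Gml n k + (n:ℚ) * Gml n (k+1) := by
  cases n with
  | zero => rw [L1' 0 k]; simp [Gml_zero]
  | succ j =>
    rw [L1' (j+1) k, Gml_succ j k]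
    have h1 := L1' j k
    push_cast
    push_cast at h1
    linear_combination (-1 : ℚ) * h1

lemma stirling_conn : ∀ n m : ℕ,
    Gml n m = (-1)^(n+m) * ((m.factorial : ℚ) / (n.factorial : ℚ)) * (stirlingFirst n m : ℚ) := by
  intro n
  induction n with
  | zero =>
    intro m
    cases m with
    | zero => simp [Gml_zero, Hml_zero_right, stirlingFirst]
    | succ k => simp [Gml_zero, Hml_zero_left, stirlingFirst]
  | succ n ih =>
    intro m
    cases m with
    | zero =>
      have : stirlingFirst (n+1) 0 = 0 := rfl
      simp [Gml_zero_right, this]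
    | succ k =>
      have h := Gml_rec n k
      rw [ih k, ih (k+1)] at h
      have hs : (stirlingFirst (n+1) (k+1) : ℚ)
          = (stirlingFirst n k : ℚ) - (n:ℚ) * (stirlingFirst n (k+1) : ℚ) := by
        have : stirlingFirst (n+1) (k+1) = stirlingFirst n k - n * stirlingFirst n (k+1) := rfl
        rw [this]; push_cast; ring
      have hsign : ((-1:ℚ))^(n+1+(k+1)) = (-1)^(n+k) := by
        rw [show n+1+(k+1) = (n+k)+2 from by ring, pow_add]; norm_num
      have hsign2 : ((-1:ℚ))^(n+(k+1)) = -(-1)^(n+k) := by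
        rw [show n+(k+1) = (n+k)+1 from by ring, pow_add]; norm_num
      have hfn : ((n+1).factorial : ℚ) = ((n:ℚ)+1) * (n.factorial : ℚ) := by
        rw [Nat.factorial_succ]; push_cast; ring
      have hfk : ((k+1).factorial : ℚ) = ((k:ℚ)+1) * (k.factorial : ℚ) := by
        rw [Nat.factorial_succ]; push_cast; ring
      have hn0 : ((n:ℚ)+1) ≠ 0 := by positivity
      have hnf : ((n.factorial : ℚ)) ≠ 0 := by
        exact_mod_cast Nat.factorial_ne_zero n
      rw [hs, hsign, hfn, hfk]
      rw [hsign2, hfk] at h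
      field_simp at h ⊢
      linear_combination h

lemma pascal_sum (a : ℕ → ℚ) (n : ℕ) :
    ∑ k ∈ range (n+2), ((n+1).choose k : ℚ) * a k
      = ∑ k ∈ range (n+1), (n.choose k : ℚ) * a k
        + ∑ k ∈ range (n+1), (n.choose k : ℚ) * a (k+1) := by
  rw [Finset.sum_range_succ' (fun k => ((n+1).choose k : ℚ) * a k) (n+1)]
  have h1 : ∀ k ∈ range (n+1), (((n+1).choose (k+1) : ℕ) : ℚ) * a (k+1)
      = (n.choose k : ℚ) * a (k+1) + (n.choose (k+1) : ℚ) * a (k+1) := by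
    intro k _
    rw [Nat.choose_succ_succ]
    push_cast
    ring
  rw [Finset.sum_congr rfl h1, Finset.sum_add_distrib]
  have h2 : ∑ k ∈ range (n+1), (n.choose k : ℚ) * a k
      = ∑ k ∈ range (n+1), (n.choose (k+1) : ℚ) * a (k+1) + (n.choose 0 : ℚ) * a 0 := by
    rw [← Finset.sum_range_succ' (fun k => (n.choose k : ℚ) * a k) (n+1),
      Finset.sum_range_succ (fun k => (n.choose k : ℚ) * a k) (n+1)]
    simp [Nat.choose_succ_self]
  rw [h2]
  simp only [Nat.choose_zero_right, Nat.cast_one]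
  ring

-- The key auxiliary sum
lemma Wlem (m n : ℕ)
    (hA : ∀ n, ∑ k ∈ range (n+1), (n.choose k : ℚ) * (-1)^k * Hml k m = (-1)^m * Gml n m)
    (hB : ∀ n, ∑ k ∈ range (n+1), (n.choose k : ℚ) * (-1)^k * Gml k m = (-1)^m * Hml n m) :
    ∑ j ∈ range (n+1), (((n+1).choose (j+1) : ℚ)) * (-1)^j * Hml j m
      = (-1)^m * Hml n m := by
  have e1 := hA (n+1)
  have e2 := hB (n+1)
  rw [Finset.sum_range_succ' (fun k => ((n+1).choose k : ℚ) * (-1)^k * Hml k m) (n+1)] at e1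
  rw [Finset.sum_range_succ' (fun k => ((n+1).choose k : ℚ) * (-1)^k * Gml k m) (n+1)] at e2
  have comb : ∀ j ∈ range (n+1), (((n+1).choose (j+1) : ℚ)) * (-1)^j * Hml j m
      = -(((n+1).choose (j+1) : ℚ) * (-1)^(j+1) * Hml (j+1) m)
        + ((n+1).choose (j+1) : ℚ) * (-1)^(j+1) * Gml (j+1) m := by
    intro j _
    rw [Gml_succ j m]
    ring
  rw [Finset.sum_congr rfl comb, Finset.sum_add_distrib]
  have eH : ∑ j ∈ range (n+1), -(((n+1).choose (j+1) : ℚ) * (-1)^(j+1) * Hml (j+1) m)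
      = -((-1)^m * Gml (n+1) m - ((n+1).choose 0 : ℚ) * (-1)^0 * Hml 0 m) := by
    rw [Finset.sum_neg_distrib]
    congr 1
    linarith [e1]
  rw [eH]
  have eG : ∑ j ∈ range (n+1), ((n+1).choose (j+1) : ℚ) * (-1)^(j+1) * Gml (j+1) m
      = (-1)^m * Hml (n+1) m - ((n+1).choose 0 : ℚ) * (-1)^0 * Gml 0 m := by
    linarith [e2]
  rw [eG, Gml_zero, Gml_succ]
  simp
  ring

lemma hG'lem (k m : ℕ) : Gml (k+1) (m+1) = ((m:ℚ)+1) * Hml k m / ((k:ℚ)+1) := by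
  have hk0 : ((k:ℚ)+1) ≠ 0 := by positivity
  field_simp
  linear_combination L1' k m

lemma hCClem (N k : ℕ) : (N.choose k : ℚ) / ((k:ℚ)+1) = ((N+1).choose (k+1) : ℚ) / ((N:ℚ)+1) := by
  have hk0 : ((k:ℚ)+1) ≠ 0 := by positivity
  have hN0 : ((N:ℚ)+1) ≠ 0 := by positivity
  rw [div_eq_div_iff hk0 hN0]
  have hc : ((N:ℚ)+1) * (N.choose k : ℚ) = ((N+1).choose (k+1) : ℚ) * ((k:ℚ)+1) := by
    exact_mod_cast Nat.add_one_mul_choose_eq N k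
  linear_combination hc

lemma AB : ∀ m : ℕ,
    (∀ n, ∑ k ∈ range (n+1), (n.choose k : ℚ) * (-1)^k * Hml k m = (-1)^m * Gml n m)
  ∧ (∀ n, ∑ k ∈ range (n+1), (n.choose k : ℚ) * (-1)^k * Gml k m = (-1)^m * Hml n m) := by
  intro m
  induction m with
  | zero =>
    constructor
    · intro n
      have hQ : ∑ k ∈ range (n+1), (n.choose k:ℚ) * (-1)^k = if n = 0 then 1 else 0 := by
        have h0 := @Int.alternating_sum_range_choose n
        have h2 : ((∑ j ∈ range (n+1), (-1)^j * (n.choose j : ℤ) : ℤ) : ℚ)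
            = ((if n = 0 then (1:ℤ) else 0 : ℤ) : ℚ) := by exact_mod_cast h0
        push_cast at h2
        rw [← h2]
        apply Finset.sum_congr rfl; intro k _; ring
      calc ∑ k ∈ range (n+1), (n.choose k:ℚ)*(-1)^k * Hml k 0
          = ∑ k ∈ range (n+1), (n.choose k:ℚ)*(-1)^k := by
            apply Finset.sum_congr rfl; intro k _; rw [Hml_zero_right]; ring
        _ = if n = 0 then 1 else 0 := hQ
        _ = (-1)^0 * Gml n 0 := by rw [Gml_zero_right]; simp
    · intro n
      have h1 : ∀ k ∈ range (n+1), (n.choose k:ℚ)*(-1)^k * Gml k 0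
          = if k = 0 then 1 else 0 := by
        intro k _
        rw [Gml_zero_right]
        by_cases hk : k = 0 <;> simp [hk]
      rw [Finset.sum_congr rfl h1, Finset.sum_ite_eq' (range (n+1)) 0 (fun _ => (1:ℚ))]
      simp [Hml_zero_right]
  | succ m ih =>
    obtain ⟨ihA, ihB⟩ := ih
    have hW := fun n => Wlem m n ihA ihB
    have key2 : ∀ N, ∀ k ∈ range (N+1), (N.choose k : ℚ) * (-1)^(k+1) * Gml (k+1) (m+1)
        = (-(((m:ℚ)+1)/((N:ℚ)+1))) * (((N+1).choose (k+1) : ℚ) * (-1)^k * Hml k m) := by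
      intro N k _
      rw [hG'lem k m]
      have hk0 : ((k:ℚ)+1) ≠ 0 := by positivity
      have hN0 : ((N:ℚ)+1) ≠ 0 := by positivity
      have h := hCClem N k
      field_simp at h ⊢
      linear_combination (-(Hml k m * (-1:ℚ)^k)) * h
    have hA1 : ∀ n, ∑ k ∈ range (n+1), (n.choose k : ℚ) * (-1)^k * Hml k (m+1)
        = (-1)^(m+1) * Gml n (m+1) := by
      intro n
      cases n with
      | zero => simp [Hml_zero_left, Gml_zero]
      | succ N =>
        have hp := pascal_sum (fun k => (-1:ℚ)^k * Hml k (m+1)) N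
        simp only [← mul_assoc] at hp
        rw [hp]
        have step2 : ∀ k ∈ range (N+1), (N.choose k : ℚ) * (-1)^(k+1) * Hml (k+1) (m+1)
            = -((N.choose k : ℚ) * (-1)^k * Hml k (m+1))
              + (-(((m:ℚ)+1)/((N:ℚ)+1))) * (((N+1).choose (k+1) : ℚ) * (-1)^k * Hml k m) := by
          intro k hk
          rw [← key2 N k hk, Gml_succ]
          ring
        rw [Finset.sum_congr rfl step2, Finset.sum_add_distrib, Finset.sum_neg_distrib,
          ← Finset.mul_sum, hW N]
        have hN0 : ((N:ℚ)+1) ≠ 0 := by positivity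
        have hL := L1' N m
        field_simp
        linear_combination ((-1:ℚ)^m) * hL
    refine ⟨hA1, ?_⟩
    intro n
    induction n with
    | zero => simp [Gml_zero, Hml_zero_left]
    | succ N ihn =>
      have hp := pascal_sum (fun k => (-1:ℚ)^k * Gml k (m+1)) N
      simp only [← mul_assoc] at hp
      rw [hp, ihn]
      rw [Finset.sum_congr rfl (key2 N), ← Finset.mul_sum, hW N]
      have hN0 : ((N:ℚ)+1) ≠ 0 := by positivity
      have hL := L1' N m
      have hg : Hml (N+1) (m+1) = Hml N (m+1) + Gml (N+1) (m+1) := by rw [Gml_succ]; ring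
      rw [hg]
      field_simp
      linear_combination ((-1:ℚ)^m) * hL
theorem stmt_2 (n m : ℕ) :
    ∑ k ∈ Finset.range (n + 1), (n.choose k : ℚ) * (-1) ^ k * Hml k m =
      (-1) ^ n * ((m.factorial : ℚ) / (n.factorial : ℚ)) * (stirlingFirst n m : ℚ) := by
  have hA := (AB m).1 n
  rw [hA, stirling_conn n m]
  have hsign : ((-1:ℚ))^m * ((-1:ℚ))^(n+m) = (-1:ℚ)^n := by
    rw [pow_add, show ((-1:ℚ))^m * (((-1:ℚ))^n * ((-1:ℚ))^m) = (-1:ℚ)^n * (((-1:ℚ))^m * ((-1:ℚ))^m) from by ring,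
      ← pow_add, ← two_mul, pow_mul]
    norm_num
  linear_combination (((m.factorial : ℚ) / (n.factorial : ℚ)) * (stirlingFirst n m : ℚ)) * hsign
end

section
/- For all integers n ≥ 1: Σ_{k=0}^{n} C(n,k) (−1)^k H_k(2) = (2/n)·H_{n−1}. -/
open Finset

lemma Hml_two_pairs (n : ℕ) :
    Hml n 2 = ∑ p ∈ ((Finset.Icc 1 n ×ˢ Finset.Icc 1 n).filter fun p => p.1 + p.2 ≤ n),
      (1 : ℚ) / p.1 * (1 / p.2) := by
  unfold Hml
  refine Finset.sum_nbij' (fun k => (k 0, k 1)) (fun p => ![p.1, p.2]) ?_ ?_ ?_ ?_ ?_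
  · intro k hk
    simp only [mem_filter, Fintype.mem_piFinset, Fin.sum_univ_two] at hk
    simp only [mem_filter, mem_product]
    exact ⟨⟨hk.1 0, hk.1 1⟩, hk.2⟩
  · intro p hp
    simp only [mem_filter, mem_product] at hp
    simp only [mem_filter, Fintype.mem_piFinset, Fin.sum_univ_two]
    refine ⟨fun i => ?_, by simpa using hp.2⟩
    fin_cases i <;> simp [hp.1.1, hp.1.2]
  · intro k hk
    funext i
    fin_cases i <;> simp
  · intro p hp; simp
  · intro k hk
    simp [Fin.prod_univ_two, mul_comm]

lemma Hml_two_nested (n : ℕ) :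
    Hml n 2 = ∑ i ∈ Finset.Icc 1 n, (1 : ℚ) / i * harm (n - i) := by
  rw [Hml_two_pairs]
  rw [Finset.sum_filter, Finset.sum_product]
  refine Finset.sum_congr rfl fun i hi => ?_
  simp only [mem_Icc] at hi
  rw [← Finset.sum_filter]
  have : (Finset.Icc 1 n).filter (fun j => i + j ≤ n) = Finset.Icc 1 (n - i) := by
    ext j; simp only [mem_filter, mem_Icc]; omega
  rw [this, harm, Finset.mul_sum]

lemma harm_range (n : ℕ) : harm n = ∑ j ∈ Finset.range n, (1 : ℚ) / (j + 1 : ℕ) := by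
  rw [harm]
  refine Finset.sum_nbij' (fun j => j - 1) (fun j => j + 1) ?_ ?_ ?_ ?_ ?_ <;>
    (intros; simp_all [Finset.mem_Icc, Finset.mem_range]) <;> omega

lemma partial_frac (n : ℕ) :
    ∑ i ∈ Finset.Icc 1 n, (1 : ℚ) / i * (1 / ((n + 1 - i : ℕ) : ℚ)) =
      2 * harm n / (n + 1) := by
  have conv1 : ∑ i ∈ Finset.Icc 1 n, (1 : ℚ) / i * (1 / ((n + 1 - i : ℕ) : ℚ))
      = ∑ j ∈ Finset.range n, (1 : ℚ) / ((1 + j : ℕ) : ℚ) * (1 / ((n + 1 - (1 + j) : ℕ) : ℚ)) := by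
    refine Finset.sum_nbij' (fun i => i - 1) (fun j => 1 + j) ?_ ?_ ?_ ?_ ?_ <;>
      (intros a ha; simp_all [Finset.mem_Icc, Finset.mem_range]) <;> omega
  rw [conv1]
  have key : ∀ j ∈ Finset.range n, (1 : ℚ) / ((1 + j : ℕ) : ℚ) * (1 / ((n + 1 - (1 + j) : ℕ) : ℚ))
      = 1 / (n + 1) * ((1 : ℚ) / ((j + 1 : ℕ) : ℚ) + 1 / ((n - j : ℕ) : ℚ)) := by
    intro j hj
    simp only [Finset.mem_range] at hj
    have h1 : ((n + 1 - (1 + j) : ℕ) : ℚ) = (n : ℚ) - j := by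
      push_cast [Nat.cast_sub (by omega : 1 + j ≤ n + 1)]; ring
    have h2 : ((n - j : ℕ) : ℚ) = (n : ℚ) - j := by
      push_cast [Nat.cast_sub (by omega : j ≤ n)]; ring
    rw [h1, h2]
    have hj1 : ((1 + j : ℕ) : ℚ) ≠ 0 := by positivity
    have hj2 : ((j + 1 : ℕ) : ℚ) = ((1 + j : ℕ) : ℚ) := by push_cast; ring
    have hnj : (n : ℚ) - j ≠ 0 := by
      have : (j : ℚ) < n := by exact_mod_cast hj
      linarith
    have hn1 : (n : ℚ) + 1 ≠ 0 := by positivity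
    rw [hj2]
    field_simp
    push_cast; ring
  rw [Finset.sum_congr rfl key, ← Finset.mul_sum, Finset.sum_add_distrib]
  have hrefl : ∑ j ∈ Finset.range n, (1 : ℚ) / ((n - j : ℕ) : ℚ)
      = ∑ j ∈ Finset.range n, (1 : ℚ) / ((j + 1 : ℕ) : ℚ) := by
    rw [← Finset.sum_range_reflect]
    refine Finset.sum_congr rfl fun j hj => ?_
    simp only [Finset.mem_range] at hj
    congr 2
    omega
  rw [hrefl, ← harm_range]
  ring

lemma Hml_two_succ (n : ℕ) :
    Hml (n + 1) 2 = Hml n 2 + 2 * harm n / (n + 1) := by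
  rw [Hml_two_nested, Hml_two_nested]
  have h1 : Finset.Icc 1 (n + 1) = insert (n + 1) (Finset.Icc 1 n) := by
    ext j; simp [Finset.mem_Icc, Finset.mem_insert]; omega
  rw [h1, Finset.sum_insert (by simp)]
  simp only [Nat.sub_self]
  have harm0 : harm 0 = 0 := by simp [harm]
  rw [harm0, mul_zero, zero_add]
  have step : ∀ i ∈ Finset.Icc 1 n, (1 : ℚ) / i * harm (n + 1 - i)
      = (1 : ℚ) / i * harm (n - i) + (1 : ℚ) / i * (1 / ((n + 1 - i : ℕ) : ℚ)) := by
    intro i hi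
    simp only [mem_Icc] at hi
    have : n + 1 - i = (n - i) + 1 := by omega
    rw [this]
    have : harm (n - i + 1) = harm (n - i) + 1 / ((n - i + 1 : ℕ) : ℚ) := by
      have h2 : Finset.Icc 1 (n - i + 1) = insert (n - i + 1) (Finset.Icc 1 (n - i)) := by
        ext j; simp [Finset.mem_Icc, Finset.mem_insert]; omega
      rw [harm, harm, h2, Finset.sum_insert (by simp)]
      push_cast; ring
    rw [this]
    ring
  rw [Finset.sum_congr rfl step, Finset.sum_add_distrib, partial_frac]

lemma shift_sum (g : ℕ → ℚ) (N : ℕ) :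
    ∑ k ∈ Finset.range (N + 1), g (k + 1) =
      ∑ m ∈ Finset.range (N + 1), g m + g (N + 1) - g 0 := by
  have h1 := Finset.sum_range_succ' g (N + 1)
  have h2 := Finset.sum_range_succ g (N + 1)
  linarith

lemma harm_succ (N : ℕ) : harm (N + 1) = harm N + 1 / ((N : ℚ) + 1) := by
  have h2 : Finset.Icc 1 (N + 1) = insert (N + 1) (Finset.Icc 1 N) := by
    ext j; simp [Finset.mem_Icc, Finset.mem_insert]; omega
  rw [harm, harm, h2, Finset.sum_insert (by simp)]
  push_cast; ring

lemma alt_sum (N : ℕ) (h : 1 ≤ N) :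
    ∑ m ∈ Finset.range (N + 1), (-1 : ℚ) ^ m * (N.choose m : ℚ) = 0 := by
  have := Int.alternating_sum_range_choose (n := N)
  rw [if_neg (by omega)] at this
  have := congrArg (fun z : ℤ => (z : ℚ)) this
  push_cast at this
  convert this using 2

lemma alt_shift (N : ℕ) :
    ∑ k ∈ Finset.range (N + 1), (-1 : ℚ) ^ k * ((N + 1).choose (k + 1) : ℚ) = 1 := by
  have h0 := alt_sum (N + 1) (by omega)
  rw [Finset.sum_range_succ' (fun m => (-1 : ℚ) ^ m * ((N + 1).choose m : ℚ)) (N + 1)] at h0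
  simp only [pow_succ, pow_zero, one_mul, Nat.choose_zero_right, Nat.cast_one] at h0
  have : ∑ k ∈ Finset.range (N + 1), (-1 : ℚ) ^ k * (-1) * ((N + 1).choose (k + 1) : ℚ)
      = -∑ k ∈ Finset.range (N + 1), (-1 : ℚ) ^ k * ((N + 1).choose (k + 1) : ℚ) := by
    rw [← Finset.sum_neg_distrib]
    exact Finset.sum_congr rfl fun k _ => by ring
  rw [this] at h0
  linarith

lemma choose_div (N k : ℕ) :
    (N.choose k : ℚ) / ((k : ℚ) + 1) = (((N + 1).choose (k + 1) : ℚ)) / ((N : ℚ) + 1) := by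
  have hc : ((N + 1) * N.choose k : ℕ) = ((N + 1).choose (k + 1) * (k + 1) : ℕ) := by
    exact_mod_cast Nat.add_one_mul_choose_eq N k
  have hc' : ((N : ℚ) + 1) * (N.choose k : ℚ) = ((N + 1).choose (k + 1) : ℚ) * ((k : ℚ) + 1) := by
    exact_mod_cast congrArg (fun z : ℕ => (z : ℚ)) hc
  rw [div_eq_div_iff (by positivity) (by positivity)]
  linarith

lemma lemP (N : ℕ) :
    ∑ k ∈ Finset.range (N + 1), (-1 : ℚ) ^ k * (N.choose k : ℚ) / ((k : ℚ) + 1)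
      = 1 / ((N : ℚ) + 1) := by
  have : ∀ k ∈ Finset.range (N + 1), (-1 : ℚ) ^ k * (N.choose k : ℚ) / ((k : ℚ) + 1)
      = 1 / ((N : ℚ) + 1) * ((-1 : ℚ) ^ k * ((N + 1).choose (k + 1) : ℚ)) := by
    intro k _
    rw [mul_div_assoc, choose_div]
    ring
  rw [Finset.sum_congr rfl this, ← Finset.mul_sum, alt_shift, mul_one]

lemma lemA (N : ℕ) :
    ∑ m ∈ Finset.range (N + 2), (-1 : ℚ) ^ m * ((N + 1).choose m : ℚ) * harm m
      = -1 / ((N : ℚ) + 1) := by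
  rw [Finset.sum_range_succ' (fun m => (-1 : ℚ) ^ m * ((N + 1).choose m : ℚ) * harm m) (N + 1)]
  have h0 : (-1 : ℚ) ^ 0 * ((N + 1).choose 0 : ℚ) * harm 0 = 0 := by simp [harm]
  rw [h0, add_zero]
  have expand : ∀ k ∈ Finset.range (N + 1),
      (-1 : ℚ) ^ (k + 1) * ((N + 1).choose (k + 1) : ℚ) * harm (k + 1)
      = -((-1 : ℚ) ^ k * (N.choose k : ℚ) * harm k)
        - (-1 : ℚ) ^ k * (N.choose k : ℚ) / ((k : ℚ) + 1)
        + (fun m => (-1 : ℚ) ^ m * (N.choose m : ℚ) * harm m) (k + 1) := by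
    intro k _
    simp only
    rw [Nat.choose_succ_succ, harm_succ]
    push_cast
    ring
  rw [Finset.sum_congr rfl expand]
  rw [Finset.sum_add_distrib, Finset.sum_sub_distrib, Finset.sum_neg_distrib]
  rw [shift_sum (fun m => (-1 : ℚ) ^ m * (N.choose m : ℚ) * harm m) N]
  simp only [Nat.choose_succ_self, Nat.cast_zero, harm, Finset.Icc_self]
  rw [lemP]
  simp [harm]
  ring

lemma lemB (N : ℕ) :
    ∑ m ∈ Finset.range (N + 1), (-1 : ℚ) ^ m * (N.choose m : ℚ) * (1 / (m : ℚ))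
      = -harm N := by
  induction N with
  | zero => simp [harm]
  | succ N ih =>
    rw [Finset.sum_range_succ'
      (fun m => (-1 : ℚ) ^ m * ((N + 1).choose m : ℚ) * (1 / (m : ℚ))) (N + 1)]
    have h0 : (-1 : ℚ) ^ 0 * ((N + 1).choose 0 : ℚ) * (1 / ((0 : ℕ) : ℚ)) = 0 := by simp
    rw [h0, add_zero]
    have expand : ∀ k ∈ Finset.range (N + 1),
        (-1 : ℚ) ^ (k + 1) * ((N + 1).choose (k + 1) : ℚ) * (1 / ((k + 1 : ℕ) : ℚ))
        = -((-1 : ℚ) ^ k * (N.choose k : ℚ) / ((k : ℚ) + 1))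
          + (fun m => (-1 : ℚ) ^ m * (N.choose m : ℚ) * (1 / (m : ℚ))) (k + 1) := by
      intro k _
      simp only
      rw [Nat.choose_succ_succ]
      push_cast
      ring
    rw [Finset.sum_congr rfl expand, Finset.sum_add_distrib, Finset.sum_neg_distrib]
    rw [shift_sum (fun m => (-1 : ℚ) ^ m * (N.choose m : ℚ) * (1 / (m : ℚ))) N]
    rw [lemP, ih, harm_succ]
    simp

lemma lemT (N : ℕ) :
    ∑ j ∈ Finset.range (N + 1), (-1 : ℚ) ^ j * (N.choose j : ℚ) * harm j / ((j : ℚ) + 1)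
      = -harm N / ((N : ℚ) + 1) := by
  have expand : ∀ j ∈ Finset.range (N + 1),
      (-1 : ℚ) ^ j * (N.choose j : ℚ) * harm j / ((j : ℚ) + 1)
      = 1 / ((N : ℚ) + 1) *
        (-((fun m => (-1 : ℚ) ^ m * ((N + 1).choose m : ℚ) * harm m) (j + 1))
          + (fun m => (-1 : ℚ) ^ m * ((N + 1).choose m : ℚ) * (1 / (m : ℚ))) (j + 1)) := by
    intro j _
    simp only
    have h1 : (-1 : ℚ) ^ j * (N.choose j : ℚ) * harm j / ((j : ℚ) + 1)
        = (-1 : ℚ) ^ j * ((N.choose j : ℚ) / ((j : ℚ) + 1)) * harm j := by ring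
    rw [h1, choose_div, harm_succ]
    push_cast
    ring
  rw [Finset.sum_congr rfl expand, ← Finset.mul_sum, Finset.sum_add_distrib,
    Finset.sum_neg_distrib]
  have hA := lemA N
  rw [Finset.sum_range_succ'
    (fun m => (-1 : ℚ) ^ m * ((N + 1).choose m : ℚ) * harm m) (N + 1)] at hA
  have hB := lemB (N + 1)
  rw [Finset.sum_range_succ'
    (fun m => (-1 : ℚ) ^ m * ((N + 1).choose m : ℚ) * (1 / (m : ℚ))) (N + 1)] at hB
  have harm_zero : harm 0 = 0 := by simp [harm]
  simp only [pow_zero, one_mul, Nat.choose_zero_right, Nat.cast_one, harm_zero,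
    Nat.cast_zero, div_zero, mul_zero, add_zero] at hA hB
  rw [hA, hB, harm_succ]
  have hN : ((N : ℚ) + 1) ≠ 0 := by positivity
  field_simp
  ring

lemma Hml_zero : Hml 0 2 = 0 := by
  rw [Hml_two_nested]; simp

theorem stmt_7 (n : ℕ) (hn : 1 ≤ n) :
    ∑ k ∈ Finset.range (n + 1), (n.choose k : ℚ) * (-1) ^ k * Hml k 2 =
      2 / (n : ℚ) * harm (n - 1) := by
  obtain ⟨N, rfl⟩ : ∃ N, n = N + 1 := ⟨n - 1, by omega⟩
  rw [Nat.add_sub_cancel]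
  rw [Finset.sum_range_succ'
    (fun k => (((N + 1).choose k : ℕ) : ℚ) * (-1) ^ k * Hml k 2) (N + 1)]
  have h0 : (((N + 1).choose 0 : ℕ) : ℚ) * (-1) ^ 0 * Hml 0 2 = 0 := by
    simp [Hml_zero]
  rw [h0, add_zero]
  have expand : ∀ k ∈ Finset.range (N + 1),
      (((N + 1).choose (k + 1) : ℕ) : ℚ) * (-1) ^ (k + 1) * Hml (k + 1) 2
      = -((fun m => ((N.choose m : ℕ) : ℚ) * (-1) ^ m * Hml m 2) k)
        - 2 * ((-1 : ℚ) ^ k * (N.choose k : ℚ) * harm k / ((k : ℚ) + 1))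
        + (fun m => ((N.choose m : ℕ) : ℚ) * (-1) ^ m * Hml m 2) (k + 1) := by
    intro k _
    simp only
    rw [Nat.choose_succ_succ, Hml_two_succ]
    push_cast
    ring
  rw [Finset.sum_congr rfl expand, Finset.sum_add_distrib, Finset.sum_sub_distrib,
    Finset.sum_neg_distrib, shift_sum (fun m => ((N.choose m : ℕ) : ℚ) * (-1) ^ m * Hml m 2) N,
    ← Finset.mul_sum, lemT]
  simp only [Nat.choose_succ_self, Nat.cast_zero, Hml_zero, Nat.choose_zero_right, Nat.cast_one]
  push_cast
  have hN : ((N : ℚ) + 1) ≠ 0 := by positivity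
  field_simp
  ring
end

section
/- For all integers m ≥ 0 and n ≥ 1: Σ_{k=1}^{n} H_{n−k}(m)/(k(k+1)) = H_n(m) + H_n(m+1) − H_{n+1}(m+1). -/
open Finset

lemma Hml_succ (n m : ℕ) :
    Hml n (m + 1) = ∑ k ∈ Finset.Icc 1 n, Hml (n - k) m / (k : ℚ) := by
  unfold Hml
  have key : ∀ k ∈ Finset.Icc 1 n,
      (∑ t ∈ (Fintype.piFinset fun _ : Fin m => Finset.Icc 1 (n - k)).filter
        (fun t => ∑ i, t i ≤ n - k), ∏ i, (1 : ℚ) / (t i : ℚ)) / (k : ℚ)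
      = ∑ t ∈ (Fintype.piFinset fun _ : Fin m => Finset.Icc 1 (n - k)).filter
        (fun t => ∑ i, t i ≤ n - k), (1 / (k : ℚ)) * ∏ i, (1 : ℚ) / (t i : ℚ) := by
    intro k _
    rw [Finset.sum_div]
    exact Finset.sum_congr rfl fun t _ => by ring
  rw [Finset.sum_congr rfl key, Finset.sum_sigma']
  refine Finset.sum_nbij'
    (i := fun g => (⟨g 0, Fin.tail g⟩ : Σ _ : ℕ, (Fin m → ℕ)))
    (j := fun p => Fin.cons p.1 p.2) ?_ ?_ ?_ ?_ ?_
  · intro g hg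
    simp only [Finset.mem_sigma, Finset.mem_filter, Fintype.mem_piFinset,
      Finset.mem_Icc] at hg ⊢
    obtain ⟨hg1, hg2⟩ := hg
    rw [Fin.sum_univ_succ] at hg2
    refine ⟨⟨(hg1 0).1, (hg1 0).2⟩, fun i => ?_, ?_⟩
    · have h1 := hg1 i.succ
      have hle : g i.succ ≤ ∑ j : Fin m, g j.succ :=
        Finset.single_le_sum (f := fun j : Fin m => g j.succ) (fun j _ => Nat.zero_le _)
          (Finset.mem_univ i)
      unfold Fin.tail
      omega
    · unfold Fin.tail
      omega
  · rintro ⟨k, t⟩ hp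
    simp only [Finset.mem_sigma, Finset.mem_filter, Fintype.mem_piFinset,
      Finset.mem_Icc] at hp ⊢
    obtain ⟨⟨hk1, hk2⟩, ht, hts⟩ := hp
    constructor
    · intro i
      refine Fin.cases ?_ ?_ i
      · simpa using ⟨hk1, hk2⟩
      · intro j
        have := ht j
        simp only [Fin.cons_succ]
        exact ⟨this.1, le_trans this.2 (Nat.sub_le n k)⟩
    · rw [Fin.sum_univ_succ]
      simp only [Fin.cons_zero, Fin.cons_succ]
      omega
  · intro g _
    exact Fin.cons_self_tail g
  · rintro ⟨k, t⟩ _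
    simp [Fin.tail]
  · intro g _
    rw [Fin.prod_univ_succ]
    simp [Fin.tail]


theorem stmt_14 (n m : ℕ) (hn : 1 ≤ n) :
    ∑ k ∈ Finset.Icc 1 n, Hml (n - k) m / ((k : ℚ) * ((k : ℚ) + 1)) =
      Hml n m + Hml n (m + 1) - Hml (n + 1) (m + 1) := by
  have h1 : ∀ k ∈ Finset.Icc 1 n,
      Hml (n - k) m / ((k : ℚ) * ((k : ℚ) + 1))
      = Hml (n - k) m / (k : ℚ) - Hml (n - k) m / ((k : ℚ) + 1) := by
    intro k hk
    simp only [Finset.mem_Icc] at hk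
    have hk0 : (k : ℚ) ≠ 0 := Nat.cast_ne_zero.mpr (by omega)
    have hk1 : (k : ℚ) + 1 ≠ 0 := by positivity
    field_simp
    ring
  rw [Finset.sum_congr rfl h1, Finset.sum_sub_distrib, ← Hml_succ n m]
  have h2 : ∑ k ∈ Finset.Icc 1 n, Hml (n - k) m / ((k : ℚ) + 1)
      = ∑ j ∈ Finset.Icc 2 (n + 1), Hml (n + 1 - j) m / (j : ℚ) := by
    have hmap : Finset.map (addRightEmbedding 1) (Finset.Icc 1 n)
        = Finset.Icc 2 (n + 1) := by
      rw [Finset.map_add_right_Icc]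
    rw [← hmap, Finset.sum_map]
    refine Finset.sum_congr rfl fun k hk => ?_
    simp only [addRightEmbedding_apply]
    have : n + 1 - (k + 1) = n - k := by omega
    rw [this, Nat.cast_add, Nat.cast_one]
  rw [h2]
  have h3 : Hml (n + 1) (m + 1)
      = Hml n m + ∑ j ∈ Finset.Icc 2 (n + 1), Hml (n + 1 - j) m / (j : ℚ) := by
    rw [Hml_succ, show Finset.Icc 1 (n + 1) = Finset.cons 1 (Finset.Ioc 1 (n + 1))
        (by simp) from Finset.Icc_eq_cons_Ioc (by omega), Finset.sum_cons]
    simp [← Finset.Icc_add_one_left_eq_Ioc]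
  rw [h3]
  ring
end
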